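/- Let f₀:[0,1]→ℝ be continuous and increasing, and n ≥ 1. Then for all r ∈ [0,1), r^{1−n} Gₙ(r) − r² Gₙ(1) = (1 − r²) ∫₀¹ s f₀(s) ds + (n+1) r² ∫₀¹ s (1 − s^{2n}) (f₀(s) − f₀(sr)) ds; in particular if f₀ is strictly increasing and positive this quantity is strictly positive for r ∈ [0,1). -/

import Mathlib

open MeasureTheory Set

noncomputable def Gfun (n : ℕ) (Ω : ℝ) (f₀ : ℝ → ℝ) (r : ℝ) : ℝ :=
  (n:ℝ)*Ω*r^(n+1) + r^(n-1) * (∫ s in (0:ℝ)..1, s * f₀ s)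
    - ((n:ℝ)+1) * r^(n-1) * (∫ s in (0:ℝ)..r, s * f₀ s)
    + ((n:ℝ)+1) * r ^ (-((n:ℤ)+1)) * ∫ s in (0:ℝ)..r, s^(2*n+1) * f₀ s

theorem stmt12 (n : ℕ) (hn : 1 ≤ n) (Ω : ℝ) (f₀ : ℝ → ℝ)
    (hc : ContinuousOn f₀ (Set.Icc 0 1)) (hmono : MonotoneOn f₀ (Set.Icc 0 1)) :
    (∀ r ∈ Set.Ioo (0:ℝ) 1,
      r ^ (1-(n:ℤ)) * Gfun n Ω f₀ r - r^2 * Gfun n Ω f₀ 1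
        = (1 - r^2) * (∫ s in (0:ℝ)..1, s * f₀ s)
          + ((n:ℝ)+1) * r^2 * ∫ s in (0:ℝ)..1, s * (1 - s^(2*n)) * (f₀ s - f₀ (s*r))) ∧
    (StrictMonoOn f₀ (Set.Icc 0 1) → (∀ r ∈ Set.Icc (0:ℝ) 1, 0 < f₀ r) →
      ∀ r ∈ Set.Ioo (0:ℝ) 1,
        0 < r ^ (1-(n:ℤ)) * Gfun n Ω f₀ r - r^2 * Gfun n Ω f₀ 1) := by
  have hint : ∀ g : ℝ → ℝ, ContinuousOn g (Icc 0 1) →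
      IntervalIntegrable g volume 0 1 := fun g hg =>
    ContinuousOn.intervalIntegrable (by rwa [uIcc_of_le (by norm_num : (0:ℝ) ≤ 1)])
  have key : ∀ r ∈ Set.Ioo (0:ℝ) 1,
      r ^ (1-(n:ℤ)) * Gfun n Ω f₀ r - r^2 * Gfun n Ω f₀ 1
        = (1 - r^2) * (∫ s in (0:ℝ)..1, s * f₀ s)
          + ((n:ℝ)+1) * r^2 * ∫ s in (0:ℝ)..1, s * (1 - s^(2*n)) * (f₀ s - f₀ (s*r)) := by
    intro r hr
    obtain ⟨hr0, hr1⟩ := hr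
    have hrne : r ≠ 0 := hr0.ne'
    obtain ⟨m, rfl⟩ : ∃ m, n = m + 1 := ⟨n - 1, (Nat.succ_pred_eq_of_pos hn).symm⟩
    have hmaps : MapsTo (fun s => s * r) (Icc (0:ℝ) 1) (Icc (0:ℝ) 1) := fun s hs =>
      ⟨mul_nonneg hs.1 hr0.le, by show s * r ≤ 1; nlinarith [hs.1, hs.2, hr0, hr1]⟩
    have hcf : ContinuousOn (fun s => f₀ (s*r)) (Icc 0 1) :=
      hc.comp ((continuousOn_id).mul continuousOn_const) hmaps
    have h1 : IntervalIntegrable (fun s => s * f₀ s) volume 0 1 :=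
      hint _ ((continuousOn_id).mul hc)
    have h2 : IntervalIntegrable (fun s => s^(2*(m+1)+1) * f₀ s) volume 0 1 :=
      hint _ ((continuousOn_id.pow _).mul hc)
    have h3 : IntervalIntegrable (fun s => s * f₀ (s*r)) volume 0 1 :=
      hint _ ((continuousOn_id).mul hcf)
    have h4 : IntervalIntegrable (fun s => s^(2*(m+1)+1) * f₀ (s*r)) volume 0 1 :=
      hint _ ((continuousOn_id.pow _).mul hcf)
    -- substitution s = t r
    have hsub1 : (∫ s in (0:ℝ)..r, s * f₀ s) = r^2 * ∫ t in (0:ℝ)..1, t * f₀ (t*r) := by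
      have h := intervalIntegral.integral_comp_mul_right (a := 0) (b := 1)
        (fun s => s * f₀ s) hrne
      simp only [zero_mul, one_mul, smul_eq_mul] at h
      have h' : (∫ x in (0:ℝ)..1, x * r * f₀ (x * r))
          = r * ∫ t in (0:ℝ)..1, t * f₀ (t*r) := by
        rw [← intervalIntegral.integral_const_mul]
        apply intervalIntegral.integral_congr
        intro x _; ring
      rw [h'] at h
      field_simp at h
      simp only [mul_comm r] at h; linarith [h]
    have hsub2 : (∫ s in (0:ℝ)..r, s^(2*(m+1)+1) * f₀ s)
        = r^(2*(m+1)+2) * ∫ t in (0:ℝ)..1, t^(2*(m+1)+1) * f₀ (t*r) := by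
      have h := intervalIntegral.integral_comp_mul_right (a := 0) (b := 1)
        (fun s => s^(2*(m+1)+1) * f₀ s) hrne
      simp only [zero_mul, one_mul, smul_eq_mul] at h
      have h' : (∫ x in (0:ℝ)..1, (x * r)^(2*(m+1)+1) * f₀ (x * r))
          = r^(2*(m+1)+1) * ∫ t in (0:ℝ)..1, t^(2*(m+1)+1) * f₀ (t*r) := by
        rw [← intervalIntegral.integral_const_mul]
        apply intervalIntegral.integral_congr
        intro x _; ring
      rw [h'] at h
      field_simp at h
      linear_combination -h
    have hsplit : (∫ s in (0:ℝ)..1, s * (1 - s^(2*(m+1))) * (f₀ s - f₀ (s*r)))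
        = (∫ s in (0:ℝ)..1, s * f₀ s) - (∫ s in (0:ℝ)..1, s^(2*(m+1)+1) * f₀ s)
          - (∫ s in (0:ℝ)..1, s * f₀ (s*r))
          + (∫ s in (0:ℝ)..1, s^(2*(m+1)+1) * f₀ (s*r)) := by
      rw [← intervalIntegral.integral_sub h1 h2,
          ← intervalIntegral.integral_sub (h1.sub h2) h3,
          ← intervalIntegral.integral_add ((h1.sub h2).sub h3) h4]
      apply intervalIntegral.integral_congr
      intro s _; ring
    have e1 : (1 - ((m+1:ℕ):ℤ)) = -(m:ℤ) := by push_cast; ring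
    have e2 : (-(((m+1:ℕ):ℤ)+1)) = -((m+2 : ℕ):ℤ) := by push_cast; ring
    simp only [Gfun, e1, e2, zpow_neg, zpow_natCast, Nat.add_sub_cancel, one_pow,
      hsub1, hsub2, hsplit]
    have hm : (r:ℝ)^m ≠ 0 := pow_ne_zero _ hrne
    have hm2 : (r:ℝ)^(m+2) ≠ 0 := pow_ne_zero _ hrne
    push_cast
    field_simp
    ring
  refine ⟨key, fun _ hpos r hr => ?_⟩
  rw [key r hr]
  obtain ⟨hr0, hr1⟩ := hr
  have hA : 0 < ∫ s in (0:ℝ)..1, s * f₀ s := by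
    apply intervalIntegral.intervalIntegral_pos_of_pos_on
      (hint _ ((continuousOn_id).mul hc))
    · intro x hx
      exact mul_pos hx.1 (hpos x ⟨hx.1.le, hx.2.le⟩)
    · norm_num
  have hI : 0 ≤ ∫ s in (0:ℝ)..1, s * (1 - s^(2*n)) * (f₀ s - f₀ (s*r)) := by
    apply intervalIntegral.integral_nonneg (by norm_num : (0:ℝ) ≤ 1)
    intro u hu
    have hur : u * r ≤ u := mul_le_of_le_one_right hu.1 hr1.le
    have hur0 : 0 ≤ u * r := mul_nonneg hu.1 hr0.le
    have humem : u * r ∈ Icc (0:ℝ) 1 := ⟨hur0, hur.trans hu.2⟩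
    have h1 : 0 ≤ 1 - u^(2*n) := sub_nonneg.2 (pow_le_one₀ hu.1 hu.2)
    have h2 : 0 ≤ f₀ u - f₀ (u*r) := sub_nonneg.2 (hmono humem hu hur)
    exact mul_nonneg (mul_nonneg hu.1 h1) h2
  have : 0 < (1 - r^2) := by nlinarith
  have hn1 : (0:ℝ) < (n:ℝ) + 1 := by positivity
  nlinarith [mul_nonneg (mul_nonneg hn1.le (sq_nonneg r)) hI]
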